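/- Let M be a saturated class of monomorphisms of simplicial sets satisfying the right cancellation property within monomorphisms. If M contains all spine inclusions Sp(n) → Δⁿ (where Sp(n) = Δ^{0,1} ∪ Δ^{1,2} ∪ ... ∪ Δ^{n-1,n}), then M contains all inner anodyne maps. -/

import Mathlib

open CategoryTheory Limits Simplicial

universe v u

namespace Paper

variable {C : Type u} [Category.{v} C]

/-- The cocone over the restriction of `F : J ⥤ C` to `Set.Iio m`, with point `F.obj m`;
requiring this to be a colimit cocone at limit elements `m` expresses that `F` is a
transfinite sequence (continuous at limit stages). -/
def coconeAt {J : Type v} [Preorder J] (F : J ⥤ C) (m : J) :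
    Cocone ((Monotone.functor (f := (Subtype.val : Set.Iio m → J))
      (fun _ _ h => h)) ⋙ F) where
  pt := F.obj m
  ι :=
    { app := fun j => F.map (homOfLE j.2.le)
      naturality := fun j k h => by
        dsimp
        rw [Category.comp_id, ← F.map_comp]
        rfl }

/-- A class of morphisms is (weakly) saturated if it is closed under
pushouts (cobase change), retracts, and transfinite composition. -/
structure IsSaturated (W : MorphismProperty C) : Prop where
  /-- closure under cobase change (pushouts) -/
  cobase : W.IsStableUnderCobaseChange
  /-- closure under retracts in the arrow category -/
  retract : ∀ {X Y X' Y' : C} (f : X ⟶ Y) (g : X' ⟶ Y')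
      (i : Arrow.mk f ⟶ Arrow.mk g) (r : Arrow.mk g ⟶ Arrow.mk f),
      i ≫ r = 𝟙 _ → W g → W f
  /-- closure under transfinite composition: given a well-ordered diagram which is
  continuous at limit stages and whose successor maps lie in `W`, the transfinite
  composite (the map from the bottom object to the colimit) lies in `W`. -/
  transfinite : ∀ (J : Type v) [LinearOrder J] [OrderBot J] [SuccOrder J] [WellFoundedLT J]
      (F : J ⥤ C) (c : Cocone F), IsColimit c →
      (∀ (m : J), Order.IsSuccLimit m → Nonempty (IsColimit (coconeAt F m))) →
      (∀ j : J, ¬IsMax j → W (F.map (homOfLE (Order.le_succ j)))) →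
      W (c.ι.app ⊥)

/-- The saturated class generated by a class `S` of morphisms: the smallest
saturated class containing `S`. -/
def Saturation (S : MorphismProperty C) : MorphismProperty C :=
  fun _ _ f => ∀ (W : MorphismProperty C), S ≤ W → IsSaturated W → W f

/-- The inner horn inclusions `Λ[n, i] ⟶ Δ[n]` for `0 < i < n`. -/
def InnerHorns : MorphismProperty SSet.{0} := fun X Y f =>
  ∃ (n : ℕ) (i : Fin (n + 1)) (_ : 0 < (i : ℕ)) (_ : (i : ℕ) < n)
    (hX : X = Λ[n, i]) (hY : Y = Δ[n]),
    f = eqToHom hX ≫ Λ[n, i].ι ≫ eqToHom hY.symm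

/-- A map of simplicial sets is inner anodyne if it lies in the saturated class
generated by the inner horn inclusions. -/
def InnerAnodyne : MorphismProperty SSet.{0} := Saturation InnerHorns

/-- The spine `Sp(n) ⊆ Δ[n]`: the union of the consecutive edges
`Δ^{0,1} ∪ Δ^{1,2} ∪ ⋯ ∪ Δ^{n-1,n}`. An `m`-simplex of `Δ[n]` lies in the spine iff,
as a monotone map `[m] → [n]`, its image is contained in some `{i, i+1}` (or `{i}`). -/
def spine (n : ℕ) : SSet.{0} where
  obj m := { α : Δ[n].obj m //
    ∃ i : Fin (n + 1), ∀ k, ((SSet.stdSimplex.asOrderHom α) k : ℕ) = i ∨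
      ((SSet.stdSimplex.asOrderHom α) k : ℕ) = i + 1 }
  map {m₁ m₂} f := TypeCat.ofHom fun α =>
    ⟨Δ[n].map f α.1, by
      obtain ⟨i, hi⟩ := α.2
      exact ⟨i, fun k => hi _⟩⟩

/-- The spine inclusion `Sp(n) ⟶ Δ[n]`. -/
def spineInclusion (n : ℕ) : spine n ⟶ Δ[n] where
  app m := TypeCat.ofHom fun α => α.1

section SaturatedLemmas

variable {M : MorphismProperty SSet.{0}}

lemma fin_not_isSuccLimit {k : ℕ} (m : Fin (k + 1)) : ¬ Order.IsSuccLimit m := by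
  induction m using Fin.cases with
  | zero => exact Order.not_isSuccLimit_bot
  | succ j =>
      have h1 : (Fin.castSucc j) < Fin.last k := Fin.castSucc_lt_last j
      have h2 : Order.succ (Fin.castSucc j) = j.succ := Fin.orderSucc_castSucc j
      rw [← h2]
      exact Order.not_isSuccLimit_succ_of_not_isMax h1.not_isMax

lemma IsSaturated.iso_mem (hsat : IsSaturated M) {X Y : SSet.{0}} (e : X ≅ Y) : M e.hom := by
  let F : Fin 1 ⥤ SSet.{0} := (Functor.const _).obj X
  let c : Cocone F :=
    { pt := Y
      ι := { app := fun _ => e.hom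
             naturality := by intros; simp [F] } }
  have hc : IsColimit c :=
    { desc := fun s => e.inv ≫ s.ι.app 0
      fac := fun s j => by
        have : j = 0 := Subsingleton.elim _ _
        subst this
        simp [c]
      uniq := fun s m hm => by
        have h0 := hm 0
        simp only [c] at h0
        rw [← h0, ← Category.assoc, Iso.inv_hom_id, Category.id_comp] }
  haveI : WellFoundedLT (Fin 1) := inferInstance
  have htrans := hsat.transfinite (Fin 1) F c hc
    (fun m hm => absurd hm (fin_not_isSuccLimit m))
    (fun j hj => absurd (fun b _ => le_of_eq (Subsingleton.elim b j)) hj)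
  exact htrans

lemma IsSaturated.id_mem (hsat : IsSaturated M) (X : SSet.{0}) : M (𝟙 X) :=
  hsat.iso_mem (Iso.refl X)

end SaturatedLemmas
section SubWorld

/-- A collection of subsets of `Fin (n+1)`, used to carve out a simplicial subset of `Δ[n]`. -/
abbrev SubSet (n : ℕ) := Set (Set (Fin (n + 1)))

/-- Downward closedness of a collection of subsets. -/
def dcl {n : ℕ} (𝒮 : SubSet n) : Prop :=
  ∀ ⦃A B : Set (Fin (n + 1))⦄, A ∈ 𝒮 → B ⊆ A → B ∈ 𝒮

variable {n : ℕ}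

lemma range_map_subset {m₁ m₂ : SimplexCategoryᵒᵖ} (f : m₁ ⟶ m₂) (α : Δ[n].obj m₁) :
    Set.range (SSet.stdSimplex.asOrderHom (Δ[n].map f α)) ⊆ Set.range (SSet.stdSimplex.asOrderHom α) := by
  intro x hx
  exact Set.range_comp_subset_range _ _ hx

/-- The simplicial subset of `Δ[n]` consisting of simplices whose vertex-range lies in `𝒮`. -/
def sub (𝒮 : SubSet n) (h : dcl 𝒮) : SSet.{0} where
  obj m := { α : Δ[n].obj m // Set.range (SSet.stdSimplex.asOrderHom α) ∈ 𝒮 }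
  map f := TypeCat.ofHom fun α => ⟨Δ[n].map f α.1, h α.2 (range_map_subset f α.1)⟩
  map_id m := by
    ext α
    exact types_congr_hom (Δ[n].map_id m) α.1
  map_comp f g := by
    ext α
    exact types_congr_hom (Δ[n].map_comp f g) α.1

/-- Inclusions between the simplicial subsets `sub`. -/
def subIncl {𝒮 𝒯 : SubSet n} (h𝒮 : dcl 𝒮) (h𝒯 : dcl 𝒯) (hsub : 𝒮 ⊆ 𝒯) :
    sub 𝒮 h𝒮 ⟶ sub 𝒯 h𝒯 where
  app m := TypeCat.ofHom fun α => ⟨α.1, hsub α.2⟩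
  naturality _ _ _ := rfl

lemma subIncl_comp {𝒮 𝒯 𝒰 : SubSet n} (h𝒮 : dcl 𝒮) (h𝒯 : dcl 𝒯) (h𝒰 : dcl 𝒰)
    (h1 : 𝒮 ⊆ 𝒯) (h2 : 𝒯 ⊆ 𝒰) :
    subIncl h𝒮 h𝒯 h1 ≫ subIncl h𝒯 h𝒰 h2 = subIncl h𝒮 h𝒰 (h1.trans h2) := rfl

lemma subIncl_refl {𝒮 : SubSet n} (h𝒮 : dcl 𝒮) :
    subIncl h𝒮 h𝒮 subset_rfl = 𝟙 _ := rfl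

lemma mono_subIncl {𝒮 𝒯 : SubSet n} (h𝒮 : dcl 𝒮) (h𝒯 : dcl 𝒯) (hsub : 𝒮 ⊆ 𝒯) :
    Mono (subIncl h𝒮 h𝒯 hsub) := by
  constructor
  intro Z u v huv
  ext m x
  have h := types_congr_hom (NatTrans.congr_app huv m) x
  have h2 := congrArg Subtype.val h
  exact Subtype.ext h2

lemma dcl_inter {𝒮 𝒯 : SubSet n} (h𝒮 : dcl 𝒮) (h𝒯 : dcl 𝒯) : dcl (𝒮 ∩ 𝒯) :=
  fun _ _ hA hBA => ⟨h𝒮 hA.1 hBA, h𝒯 hA.2 hBA⟩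

lemma dcl_union {𝒮 𝒯 : SubSet n} (h𝒮 : dcl 𝒮) (h𝒯 : dcl 𝒯) : dcl (𝒮 ∪ 𝒯) :=
  fun _ _ hA hBA => hA.elim (fun h => Or.inl (h𝒮 h hBA)) (fun h => Or.inr (h𝒯 h hBA))

/-- The union of two simplicial subsets is the pushout over their intersection. -/
lemma isPushout_sub {𝒮 𝒯 : SubSet n} (h𝒮 : dcl 𝒮) (h𝒯 : dcl 𝒯) :
    IsPushout (subIncl (dcl_inter h𝒮 h𝒯) h𝒯 Set.inter_subset_right)
      (subIncl (dcl_inter h𝒮 h𝒯) h𝒮 Set.inter_subset_left)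
      (subIncl h𝒯 (dcl_union h𝒮 h𝒯) Set.subset_union_right)
      (subIncl h𝒮 (dcl_union h𝒮 h𝒯) Set.subset_union_left) := by
  classical
  have eq1 : subIncl (dcl_inter h𝒮 h𝒯) h𝒯 Set.inter_subset_right ≫
      subIncl h𝒯 (dcl_union h𝒮 h𝒯) Set.subset_union_right =
      subIncl (dcl_inter h𝒮 h𝒯) h𝒮 Set.inter_subset_left ≫
      subIncl h𝒮 (dcl_union h𝒮 h𝒯) Set.subset_union_left := rfl
  refine IsPushout.of_isColimit (c := PushoutCocone.mk _ _ eq1) ?_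
  apply PushoutCocone.IsColimit.mk eq1
    (desc := fun s =>
      { app := fun m => TypeCat.ofHom fun α =>
          if h : Set.range (SSet.stdSimplex.asOrderHom α.1) ∈ 𝒯 then s.inl.app m ⟨α.1, h⟩
          else s.inr.app m ⟨α.1, α.2.resolve_right h⟩
        naturality := by
          intro m m' f
          ext α
          simp only [TypeCat.Fun.toFun_apply, types_comp_apply, TypeCat.ofHom_apply]
          by_cases h2 : Set.range (SSet.stdSimplex.asOrderHom α.1) ∈ 𝒯
          · have h1 : Set.range (SSet.stdSimplex.asOrderHom (Δ[n].map f α.1)) ∈ 𝒯 :=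
              h𝒯 h2 (range_map_subset f α.1)
            rw [dif_pos h2]
            exact (dif_pos h1).trans (FunctorToTypes.naturality s.inl f ⟨α.1, h2⟩)
          · have h2' : Set.range (SSet.stdSimplex.asOrderHom α.1) ∈ 𝒮 := α.2.resolve_right h2
            rw [dif_neg h2]
            have h1' : Set.range (SSet.stdSimplex.asOrderHom (Δ[n].map f α.1)) ∈ 𝒮 :=
              h𝒮 h2' (range_map_subset f α.1)
            by_cases h1 : Set.range (SSet.stdSimplex.asOrderHom (Δ[n].map f α.1)) ∈ 𝒯
            · exact (dif_pos h1).trans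
                ((types_congr_hom (NatTrans.congr_app s.condition m') ⟨Δ[n].map f α.1, h1', h1⟩).trans
                  (FunctorToTypes.naturality s.inr f ⟨α.1, h2'⟩))
            · exact (dif_neg h1).trans (FunctorToTypes.naturality s.inr f ⟨α.1, h2'⟩) })
  · intro s
    ext m α
    exact dif_pos α.2
  · intro s
    ext m α
    by_cases h : Set.range (SSet.stdSimplex.asOrderHom α.1) ∈ 𝒯
    · exact (dif_pos h).trans (types_congr_hom (NatTrans.congr_app s.condition m) ⟨α.1, α.2, h⟩)
    · exact dif_neg h
  · intro s mm hl hr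
    ext m α
    simp only [TypeCat.Fun.toFun_apply, types_comp_apply, TypeCat.ofHom_apply]
    by_cases h : Set.range (SSet.stdSimplex.asOrderHom α.1) ∈ 𝒯
    · rw [dif_pos h]
      exact types_congr_hom (NatTrans.congr_app hl m) ⟨α.1, h⟩
    · rw [dif_neg h]
      exact types_congr_hom (NatTrans.congr_app hr m) ⟨α.1, α.2.resolve_right h⟩

end SubWorld
section Trans

variable {M : MorphismProperty SSet.{0}} {n : ℕ}

lemma M_subIncl_congr {𝒮 𝒮' 𝒯 𝒯' : SubSet n} (e1 : 𝒮 = 𝒮') (e2 : 𝒯 = 𝒯')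
    {h𝒮 h𝒯 h𝒮' h𝒯'} {hsub : 𝒮 ⊆ 𝒯} {hsub' : 𝒮' ⊆ 𝒯'}
    (h : M (subIncl h𝒮 h𝒯 hsub)) : M (subIncl h𝒮' h𝒯' hsub') := by
  subst e1; subst e2; exact h

lemma M_subIncl_self (hsat : IsSaturated M) {𝒮 : SubSet n} (h𝒮 h𝒮' : dcl 𝒮)
    (hsub : 𝒮 ⊆ 𝒮) : M (subIncl h𝒮 h𝒮' hsub) :=
  hsat.id_mem (sub 𝒮 h𝒮)

lemma M_pushout_step (hsat : IsSaturated M) {𝒮 𝒯 : SubSet n} (h𝒮 : dcl 𝒮) (h𝒯 : dcl 𝒯)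
    (hf : M (subIncl (dcl_inter h𝒮 h𝒯) h𝒮 Set.inter_subset_left)) :
    M (subIncl h𝒯 (dcl_union h𝒮 h𝒯) Set.subset_union_right) :=
  hsat.cobase.of_isPushout (isPushout_sub h𝒮 h𝒯) hf

lemma M_subIncl_trans (hsat : IsSaturated M) {𝒮 𝒯 𝒰 : SubSet n}
    (h𝒮 : dcl 𝒮) (h𝒯 : dcl 𝒯) (h𝒰 : dcl 𝒰) (h1 : 𝒮 ⊆ 𝒯) (h2 : 𝒯 ⊆ 𝒰)
    (m1 : M (subIncl h𝒮 h𝒯 h1)) (m2 : M (subIncl h𝒯 h𝒰 h2)) :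
    M (subIncl h𝒮 h𝒰 (h1.trans h2)) := by
  let V : Fin 3 → SubSet n := ![𝒮, 𝒯, 𝒰]
  have hV : ∀ i, dcl (V i) := by
    intro i
    fin_cases i <;> assumption
  have hmono : ∀ {i j : Fin 3}, i ≤ j → V i ⊆ V j := by
    intro i j hij
    fin_cases i <;> fin_cases j <;>
      first
        | exact subset_rfl
        | exact h1
        | exact h2
        | exact h1.trans h2
        | exact absurd hij (by decide)
  let F : Fin 3 ⥤ SSet.{0} :=
    { obj := fun i => sub (V i) (hV i)
      map := fun {i j} f => subIncl (hV i) (hV j) (hmono (leOfHom f))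
      map_id := fun i => rfl
      map_comp := fun _ _ => rfl }
  have hle2 : ∀ j : Fin 3, j ≤ 2 := fun j => Fin.le_last j
  let c : Cocone F :=
    { pt := sub (V 2) (hV 2)
      ι := { app := fun i => subIncl (hV i) (hV 2) (hmono (hle2 i))
             naturality := by
               intro i j f
               simp only [Functor.const_obj_map, Category.comp_id]
               rfl } }
  have hc : IsColimit c :=
    { desc := fun s => s.ι.app 2
      fac := fun s j => by
        have h := s.ι.naturality (homOfLE (hle2 j))
        simp only [Functor.const_obj_map, Category.comp_id] at h
        exact h
      uniq := fun s mm hm => by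
        have h := hm 2
        rw [show c.ι.app 2 = 𝟙 _ from rfl, Category.id_comp] at h
        exact h }
  haveI : WellFoundedLT (Fin 3) := inferInstance
  have htrans := hsat.transfinite (Fin 3) F c hc
    (fun m hm => absurd hm (fin_not_isSuccLimit m))
    (fun j hj => by
      fin_cases j
      · exact m1
      · exact m2
      · exact absurd (fun b _ => hle2 b) hj)
  exact htrans

end Trans
section Push

variable {k n : ℕ}

/-- Pushforward of a collection of subsets along an order embedding. -/
def push (e : Fin (k + 1) ↪o Fin (n + 1)) (𝒮 : SubSet k) : SubSet n :=
  {A | ∃ B ∈ 𝒮, A = e '' B}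

lemma dcl_push (e : Fin (k + 1) ↪o Fin (n + 1)) {𝒮 : SubSet k} (h : dcl 𝒮) :
    dcl (push e 𝒮) := by
  rintro A B ⟨B0, hB0, rfl⟩ hBA
  have hBr : B ⊆ Set.range e := hBA.trans (Set.image_subset_range _ _)
  refine ⟨e ⁻¹' B, h hB0 ?_, (Set.image_preimage_eq_of_subset hBr).symm⟩
  intro x hx
  obtain ⟨b0, hb0, hb0e⟩ := hBA hx
  rwa [← e.injective hb0e]

lemma push_mono (e : Fin (k + 1) ↪o Fin (n + 1)) {𝒮 𝒯 : SubSet k} (h : 𝒮 ⊆ 𝒯) :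
    push e 𝒮 ⊆ push e 𝒯 := by
  rintro A ⟨B, hB, rfl⟩
  exact ⟨B, h hB, rfl⟩

/-- The isomorphism between `sub 𝒮` and its pushforward along an order embedding. -/
noncomputable def pushIso (e : Fin (k + 1) ↪o Fin (n + 1)) (𝒮 : SubSet k) (h𝒮 : dcl 𝒮) :
    sub 𝒮 h𝒮 ≅ sub (push e 𝒮) (dcl_push e h𝒮) := by
  refine NatIso.ofComponents (naturality := by intros; rfl) (fun m => Equiv.toIso (Equiv.ofBijective
    (fun α => ⟨SSet.stdSimplex.objMk
        ((OrderEmbedding.toOrderHom e).comp (SSet.stdSimplex.asOrderHom α.1)),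
      ⟨Set.range (SSet.stdSimplex.asOrderHom α.1), α.2,
        (Set.range_comp (⇑e) (⇑(SSet.stdSimplex.asOrderHom α.1)))⟩⟩) ⟨?_, ?_⟩))
  · -- injectivity
    intro α β hαβ
    have h1 := congrArg Subtype.val hαβ
    apply Subtype.ext
    apply (SSet.stdSimplex.objEquiv).injective
    apply SimplexCategory.Hom.ext
    apply OrderHom.ext
    funext t
    have h2 := congrArg (fun z => (SSet.stdSimplex.asOrderHom (Subtype.val z)) t) hαβ
    exact e.injective h2
  · -- surjectivity
    rintro ⟨β, B, hB, hBeq⟩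
    have hmem : ∀ t, (SSet.stdSimplex.asOrderHom β) t ∈ Set.range e := by
      intro t
      have : (SSet.stdSimplex.asOrderHom β) t ∈ Set.range (SSet.stdSimplex.asOrderHom β) := ⟨t, rfl⟩
      rw [hBeq] at this
      exact (Set.image_subset_range _ _) this
    classical
    set ψf : Fin (m.unop.len + 1) → Fin (k + 1) :=
      fun t => (hmem t).choose with hψf
    have hψspec : ∀ t, e (ψf t) = (SSet.stdSimplex.asOrderHom β) t := fun t => (hmem t).choose_spec
    have hψmono : Monotone ψf := by
      intro s t hst
      rw [← e.le_iff_le, hψspec s, hψspec t]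
      exact (SSet.stdSimplex.asOrderHom β).monotone hst
    have hrange : Set.range ψf ∈ 𝒮 := by
      have h1 : e '' Set.range ψf = e '' B := by
        rw [← Set.range_comp]
        have : (e ∘ ψf) = fun t => (SSet.stdSimplex.asOrderHom β) t := funext hψspec
        rw [this, ← hBeq]
      have h2 : Set.range ψf = B := (Set.image_injective.mpr e.injective) h1
      rwa [h2]
    refine ⟨⟨SSet.stdSimplex.objMk ⟨ψf, hψmono⟩, hrange⟩, ?_⟩
    apply Subtype.ext
    apply (SSet.stdSimplex.objEquiv).injective
    apply SimplexCategory.Hom.ext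
    apply OrderHom.ext
    funext t
    exact hψspec t

variable {M : MorphismProperty SSet.{0}}

lemma M_push (hsat : IsSaturated M) (e : Fin (k + 1) ↪o Fin (n + 1))
    {𝒮 𝒯 : SubSet k} (h𝒮 : dcl 𝒮) (h𝒯 : dcl 𝒯) (hsub : 𝒮 ⊆ 𝒯)
    (hM : M (subIncl h𝒮 h𝒯 hsub)) :
    M (subIncl (dcl_push e h𝒮) (dcl_push e h𝒯) (push_mono e hsub)) := by
  haveI : M.IsStableUnderCobaseChange := hsat.cobase
  haveI : M.RespectsIso := inferInstance
  refine (M.arrow_mk_iso_iff ?_).mp hM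
  exact Arrow.isoMk (pushIso e 𝒮 h𝒮) (pushIso e 𝒯 h𝒯) rfl

end Push
section Sets

variable {n : ℕ}

/-- Generalized horn condition: simplices missing some vertex in `T`. -/
def ghSet (T : Set (Fin (n + 1))) : SubSet n := {A | ∃ m ∈ T, m ∉ A}

/-- Face condition: simplices with vertices in `S`. -/
def faceSet (S : Set (Fin (n + 1))) : SubSet n := {A | A ⊆ S}

/-- Window condition: all vertices within distance `k`. -/
def winSet (n k : ℕ) : SubSet n := {A | ∀ x ∈ A, ∀ y ∈ A, (y : ℕ) ≤ (x : ℕ) + k}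

/-- Inner vertices of `Δ[n]`. -/
def innSet (n : ℕ) : Set (Fin (n + 1)) := {j | 0 < (j : ℕ) ∧ (j : ℕ) < n}

lemma dcl_gh (T : Set (Fin (n + 1))) : dcl (ghSet T) := by
  rintro A B ⟨m, hm, hmA⟩ hBA
  exact ⟨m, hm, fun h => hmA (hBA h)⟩

lemma dcl_face (S : Set (Fin (n + 1))) : dcl (faceSet S) :=
  fun _ _ hA hBA => hBA.trans hA

lemma dcl_win (k : ℕ) : dcl (winSet n k) :=
  fun _ _ hA hBA x hx y hy => hA x (hBA hx) y (hBA hy)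

lemma dcl_univ : dcl (Set.univ : SubSet n) := fun _ _ _ _ => trivial

lemma gh_union (T T' : Set (Fin (n + 1))) : ghSet (T ∪ T') = ghSet T ∪ ghSet T' := by
  ext A
  constructor
  · rintro ⟨m, hm | hm, hmA⟩
    · exact Or.inl ⟨m, hm, hmA⟩
    · exact Or.inr ⟨m, hm, hmA⟩
  · rintro (⟨m, hm, hmA⟩ | ⟨m, hm, hmA⟩)
    · exact ⟨m, Or.inl hm, hmA⟩
    · exact ⟨m, Or.inr hm, hmA⟩

lemma gh_singleton (j : Fin (n + 1)) : ghSet {j} = faceSet {j}ᶜ := by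
  ext A
  constructor
  · rintro ⟨m, rfl, hmA⟩
    intro x hx hxj
    rw [Set.mem_singleton_iff.mp hxj] at hx
    exact hmA hx
  · intro h
    exact ⟨j, rfl, fun hj => (h hj) rfl⟩

lemma push_univ {k : ℕ} (e : Fin (k + 1) ↪o Fin (n + 1)) :
    push e Set.univ = faceSet (Set.range e) := by
  ext A
  constructor
  · rintro ⟨B, _, rfl⟩
    exact Set.image_subset_range _ _
  · intro h
    exact ⟨e ⁻¹' A, trivial, (Set.image_preimage_eq_of_subset h).symm⟩

lemma push_gh {k : ℕ} (e : Fin (k + 1) ↪o Fin (n + 1)) (T : Set (Fin (k + 1))) :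
    push e (ghSet T) = faceSet (Set.range e) ∩ ghSet (e '' T) := by
  ext A
  constructor
  · rintro ⟨B, ⟨m, hm, hmB⟩, rfl⟩
    refine ⟨Set.image_subset_range _ _, e m, ⟨m, hm, rfl⟩, ?_⟩
    rintro ⟨b, hb, hbe⟩
    rw [e.injective hbe] at hb
    exact hmB hb
  · rintro ⟨hA, x, ⟨m, hm, rfl⟩, hmA⟩
    refine ⟨e ⁻¹' A, ⟨m, hm, fun h => hmA (Set.image_preimage_subset (⇑e) A
      (Set.mem_image_of_mem (⇑e) h))⟩,
      (Set.image_preimage_eq_of_subset hA).symm⟩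

lemma face_inter_gh {S : Set (Fin (n + 1))} {j : Fin (n + 1)} (hj : j ∈ S) :
    faceSet {j}ᶜ ∩ ghSet (Sᶜ ∩ {j}ᶜ) = faceSet {j}ᶜ ∩ ghSet Sᶜ := by
  ext A
  constructor
  · rintro ⟨h1, m, ⟨hm, _⟩, hmA⟩
    exact ⟨h1, m, hm, hmA⟩
  · rintro ⟨h1, m, hm, hmA⟩
    refine ⟨h1, m, ⟨hm, ?_⟩, hmA⟩
    intro hmj
    rw [Set.mem_singleton_iff.mp hmj] at hm
    exact hm hj

lemma compl_diff_singleton (S : Set (Fin (n + 1))) (j : Fin (n + 1)) :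
    (S \ {j})ᶜ = Sᶜ ∪ {j} := by
  ext x
  by_cases h : x = j <;> simp [Set.mem_diff, h]

lemma win_eq_gh (k : ℕ) :
    winSet (k + 1) k = ghSet {0, Fin.last (k + 1)} := by
  ext A
  constructor
  · intro h
    by_cases h0 : (0 : Fin (k + 2)) ∈ A
    · refine ⟨Fin.last (k + 1), Or.inr rfl, fun hl => ?_⟩
      have := h 0 h0 (Fin.last (k + 1)) hl
      simp [Fin.last] at this
    · exact ⟨0, Or.inl rfl, h0⟩
  · rintro ⟨m, hm, hmA⟩ x hx y hy
    rcases hm with rfl | rfl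
    · have hx1 : 1 ≤ (x : ℕ) := by
        rcases Nat.eq_zero_or_pos (x : ℕ) with h | h
        · exact absurd (by rwa [show x = 0 from Fin.ext h] at hx) hmA
        · exact h
      have := y.isLt
      omega
    · have hy1 : (y : ℕ) ≤ k := by
        rcases Nat.lt_or_ge (y : ℕ) (k + 1) with h | h
        · omega
        · have : y = Fin.last (k + 1) := Fin.ext (by have := y.isLt; simp [Fin.last]; omega)
          rw [this] at hy
          exact absurd hy hmA
      omega

lemma inn_compl (k : ℕ) :
    (innSet (k + 1))ᶜ = ({0, Fin.last (k + 1)} : Set (Fin (k + 2))) := by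
  ext x
  have hx := x.isLt
  constructor
  · intro h
    simp only [innSet, Set.mem_compl_iff, Set.mem_setOf_eq, not_and, not_lt] at h
    rcases Nat.eq_zero_or_pos (x : ℕ) with h0 | h0
    · exact Or.inl (Fin.ext h0)
    · exact Or.inr (Fin.ext (by have := h h0; simp [Fin.last]; omega))
  · rintro (rfl | rfl) <;> simp [innSet, Fin.last]

end Sets
section GenHorn

variable {M : MorphismProperty SSet.{0}}

lemma gh_mono {n : ℕ} {T T' : Set (Fin (n + 1))} (h : T ⊆ T') : ghSet T ⊆ ghSet T' := by
  rintro A ⟨m, hm, hmA⟩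
  exact ⟨m, h hm, hmA⟩

/-- Horn inclusions (at the level of `sub`) belong to `M`. -/
def HornMStmt (M : MorphismProperty SSet.{0}) (m : ℕ) : Prop :=
  ∀ i : Fin (m + 1), 0 < (i : ℕ) → (i : ℕ) < m →
    M (subIncl (dcl_gh {i}ᶜ) dcl_univ (Set.subset_univ _))

/-- Generalized inner horn inclusions (at the level of `sub`) belong to `M`. -/
def GenMStmt (M : MorphismProperty SSet.{0}) (m : ℕ) : Prop :=
  ∀ S : Set (Fin (m + 1)), S.Nonempty → S ⊆ innSet m →
    M (subIncl (dcl_gh Sᶜ) dcl_univ (Set.subset_univ _))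

lemma succAboveOrderEmb_range {m : ℕ} (j : Fin (m + 2)) :
    Set.range ⇑(Fin.succAboveOrderEmb j) = {j}ᶜ :=
  Fin.range_succAbove j

lemma succAbove_val {m : ℕ} (j : Fin (m + 2)) (x : Fin (m + 1)) :
    ((j.succAbove x : Fin (m + 2)) : ℕ) =
      if (x : ℕ) < (j : ℕ) then (x : ℕ) else (x : ℕ) + 1 := by
  rcases Nat.lt_or_ge (x : ℕ) (j : ℕ) with h | h
  · rw [if_pos h, Fin.succAbove_of_castSucc_lt j x (by rwa [Fin.lt_def])]
    rfl
  · rw [if_neg (not_lt.mpr h), Fin.succAbove_of_le_castSucc j x (by rwa [Fin.le_def])]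
    rfl

/-- Attaching the face opposite to `j ∈ S` reduces the missing set `S` of a generalized horn. -/
lemma face_step (hsat : IsSaturated M) {m : ℕ} (Hprev : GenMStmt M m)
    {S : Set (Fin (m + 2))} (hS : S ⊆ innSet (m + 1)) {j : Fin (m + 2)} (hj : j ∈ S)
    (hne : (S \ {j}).Nonempty) :
    M (subIncl (dcl_gh Sᶜ) (dcl_gh (S \ {j})ᶜ)
      (gh_mono (Set.compl_subset_compl.mpr Set.diff_subset))) := by
  set e := Fin.succAboveOrderEmb j with he
  set Sloc : Set (Fin (m + 1)) := ⇑e ⁻¹' S with hSloc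
  have hrange : Set.range ⇑e = {j}ᶜ := succAboveOrderEmb_range j
  have hlocNe : Sloc.Nonempty := by
    obtain ⟨s, hs, hsj⟩ := hne
    have : s ∈ Set.range ⇑e := by
      rw [hrange]
      exact hsj
    obtain ⟨x, hx⟩ := this
    exact ⟨x, by rw [hSloc, Set.mem_preimage, hx]; exact hs⟩
  have hlocInn : Sloc ⊆ innSet m := by
    intro x hx
    have hxS : (e x) ∈ S := hx
    have h1 := (hS hxS).1
    have h2 := (hS hxS).2
    have h3 := (hS hj).1
    have h4 := (hS hj).2
    have hv := succAbove_val j x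
    have : (e x : ℕ) = if (x : ℕ) < (j : ℕ) then (x : ℕ) else (x : ℕ) + 1 := hv
    constructor
    · by_cases hlt : (x : ℕ) < (j : ℕ) <;> simp [hlt] at this <;> omega
    · by_cases hlt : (x : ℕ) < (j : ℕ) <;> simp [hlt] at this <;> omega
  have hMloc := Hprev Sloc hlocNe hlocInn
  have hMpush := M_push hsat e _ _ _ hMloc
  -- identify the pushed sets
  have id1 : push e (ghSet Slocᶜ) = faceSet {j}ᶜ ∩ ghSet Sᶜ := by
    rw [push_gh, hrange]
    have h1 : Slocᶜ = ⇑e ⁻¹' Sᶜ := by rw [hSloc, ← Set.preimage_compl]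
    rw [h1, Set.image_preimage_eq_inter_range, hrange]
    exact face_inter_gh hj
  have id2 : push e Set.univ = faceSet {j}ᶜ := by rw [push_univ, hrange]
  have hf : M (subIncl (dcl_inter (dcl_face {j}ᶜ) (dcl_gh Sᶜ)) (dcl_face {j}ᶜ)
      Set.inter_subset_left) := M_subIncl_congr id1 id2 hMpush
  have hstep := M_pushout_step hsat (dcl_face {j}ᶜ) (dcl_gh Sᶜ) hf
  have id3 : faceSet {j}ᶜ ∪ ghSet Sᶜ = ghSet ((S \ {j})ᶜ) := by
    rw [compl_diff_singleton, gh_union, ← gh_singleton]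
    exact Set.union_comm _ _
  exact M_subIncl_congr rfl id3 hstep

/-- Chain from a generalized inner horn down to a single inner horn. -/
lemma gen_chain (hsat : IsSaturated M) {m : ℕ} (Hprev : GenMStmt M m) :
    ∀ (c : ℕ) (S : Set (Fin (m + 2))), S.ncard ≤ c → ∀ (i : Fin (m + 2)) (hi : i ∈ S),
      S ⊆ innSet (m + 1) →
      M (subIncl (dcl_gh Sᶜ) (dcl_gh {i}ᶜ)
        (gh_mono (Set.compl_subset_compl.mpr (Set.singleton_subset_iff.mpr hi)))) := by
  intro c
  induction c with
  | zero =>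
      intro S hc i hi _
      rw [Nat.le_zero, Set.ncard_eq_zero S.toFinite] at hc
      rw [hc] at hi
      exact absurd hi (Set.notMem_empty i)
  | succ c ih =>
      intro S hc i hi hS
      by_cases hSi : S = {i}
      · exact M_subIncl_congr (by rw [hSi]) rfl
          (M_subIncl_self hsat (dcl_gh {i}ᶜ) (dcl_gh {i}ᶜ) subset_rfl)
      · have hex : ∃ j, j ∈ S ∧ j ≠ i := by
          by_contra h
          push_neg at h
          apply hSi
          ext x
          exact ⟨fun hx => h x hx, fun hx => by rwa [Set.mem_singleton_iff.mp hx]⟩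
        obtain ⟨j, hjS, hji⟩ := hex
        have hiS' : i ∈ S \ {j} := ⟨hi, fun h => hji (Set.mem_singleton_iff.mp h).symm⟩
        have hstep := face_step hsat Hprev hS hjS ⟨i, hiS'⟩
        have hcard : (S \ {j}).ncard ≤ c := by
          rw [Set.ncard_diff_singleton_of_mem hjS]
          omega
        have hrest := ih (S \ {j}) hcard i hiS' (Set.diff_subset.trans hS)
        exact M_subIncl_trans hsat _ _ _ _ _ hstep hrest

lemma genM_zero : GenMStmt M 0 := by
  intro S hne hS
  have := hS hne.some_mem
  simp only [innSet, Set.mem_setOf_eq] at this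
  omega

lemma genM_succ (hsat : IsSaturated M) {m : ℕ} (Hprev : GenMStmt M m)
    (Hh : HornMStmt M (m + 1)) : GenMStmt M (m + 1) := by
  intro S hne hS
  obtain ⟨i, hi⟩ := hne
  have h1 := gen_chain hsat Hprev S.ncard S le_rfl i hi hS
  have h2 := Hh i (hS hi).1 (hS hi).2
  exact M_subIncl_trans hsat _ _ _ _ _ h1 h2

lemma genM_all (hsat : IsSaturated M) :
    ∀ m : ℕ, (∀ m' ≤ m, HornMStmt M m') → GenMStmt M m := by
  intro m
  induction m with
  | zero => exact fun _ => genM_zero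
  | succ m ih =>
      intro H
      exact genM_succ hsat (ih (fun m' h => H m' (h.trans (Nat.le_succ m)))) (H (m + 1) le_rfl)

end GenHorn
section Window

variable {M : MorphismProperty SSet.{0}}

/-- The interval `{a, ..., a+w}` inside `Fin (n+1)`. -/
def iccSet (n a w : ℕ) : Set (Fin (n + 1)) := {x | a ≤ (x : ℕ) ∧ (x : ℕ) ≤ a + w}

/-- The order embedding of `Fin (w+1)` onto the interval `{a, ..., a+w}` of `Fin (n+1)`. -/
def intervalEmb (a w n : ℕ) (h : a + w ≤ n) : Fin (w + 1) ↪o Fin (n + 1) :=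
  OrderEmbedding.ofStrictMono (fun x => ⟨a + (x : ℕ), by omega⟩)
    (fun x y hxy => by
      simp only [Fin.mk_lt_mk]
      have : (x : ℕ) < (y : ℕ) := hxy
      omega)

lemma intervalEmb_range (a w n : ℕ) (h : a + w ≤ n) :
    Set.range ⇑(intervalEmb a w n h) = iccSet n a w := by
  ext x
  constructor
  · rintro ⟨t, rfl⟩
    exact ⟨Nat.le_add_right _ _, by show a + (t : ℕ) ≤ a + w; omega⟩
  · rintro ⟨h1, h2⟩
    refine ⟨⟨(x : ℕ) - a, by omega⟩, ?_⟩
    apply Fin.ext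
    show a + ((x : ℕ) - a) = (x : ℕ)
    omega

lemma push_win (a k n : ℕ) (h : a + (k + 1) ≤ n) :
    push (intervalEmb a (k + 1) n h) (winSet (k + 1) k) =
      faceSet (iccSet n a (k + 1)) ∩ winSet n k := by
  set e := intervalEmb a (k + 1) n h with he
  have hval : ∀ t : Fin (k + 2), (e t : ℕ) = a + (t : ℕ) := fun t => rfl
  ext A
  constructor
  · rintro ⟨B, hB, rfl⟩
    refine ⟨by rw [← intervalEmb_range a (k+1) n h]; exact Set.image_subset_range _ _, ?_⟩
    rintro x ⟨x', hx', rfl⟩ y ⟨y', hy', rfl⟩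
    have := hB x' hx' y' hy'
    rw [hval, hval]
    omega
  · rintro ⟨hsub, hwin⟩
    have hsub' : A ⊆ Set.range ⇑e := by rwa [intervalEmb_range]
    refine ⟨⇑e ⁻¹' A, ?_, (Set.image_preimage_eq_of_subset hsub').symm⟩
    intro x hx y hy
    have := hwin (e x) hx (e y) hy
    rw [hval, hval] at this
    omega

/-- Partial unions in the window filtration. -/
def uWin (n k a : ℕ) : SubSet n :=
  winSet n k ∪ {A | ∃ a' < a, A ∈ faceSet (iccSet n a' (k + 1))}

lemma dcl_uWin (n k a : ℕ) : dcl (uWin n k a) := by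
  rintro A B (hA | ⟨a', ha', hA⟩) hBA
  · exact Or.inl (dcl_win k hA hBA)
  · exact Or.inr ⟨a', ha', hBA.trans hA⟩

lemma uWin_zero (n k : ℕ) : uWin n k 0 = winSet n k := by
  ext A
  simp [uWin]

lemma uWin_succ (n k a : ℕ) :
    uWin n k (a + 1) = faceSet (iccSet n a (k + 1)) ∪ uWin n k a := by
  ext A
  simp only [uWin, faceSet, Set.mem_union, Set.mem_setOf_eq]
  constructor
  · rintro (h | ⟨a', ha', hA⟩)
    · exact Or.inr (Or.inl h)
    · rcases Nat.lt_or_ge a' a with h' | h'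
      · exact Or.inr (Or.inr ⟨a', h', hA⟩)
      · have : a' = a := by omega
        subst this
        exact Or.inl hA
  · rintro (h | (h | ⟨a', ha', hA⟩))
    · exact Or.inr ⟨a, by omega, h⟩
    · exact Or.inl h
    · exact Or.inr ⟨a', by omega, hA⟩

lemma uWin_inter (n k a : ℕ) :
    faceSet (iccSet n a (k + 1)) ∩ uWin n k a =
      faceSet (iccSet n a (k + 1)) ∩ winSet n k := by
  ext A
  simp only [Set.mem_inter_iff, uWin, Set.mem_union, Set.mem_setOf_eq]
  constructor
  · rintro ⟨h1, h2 | ⟨a', ha', hA⟩⟩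
    · exact ⟨h1, h2⟩
    · refine ⟨h1, ?_⟩
      intro x hx y hy
      have hxa := (h1 hx).1
      have hya := (hA hy).2
      omega
  · rintro ⟨h1, h2⟩
    exact ⟨h1, Or.inl h2⟩

lemma win_mono (n k k' : ℕ) (h : k ≤ k') : winSet n k ⊆ winSet n k' := by
  intro A hA x hx y hy
  have := hA x hx y hy
  omega

lemma uWin_final (n k : ℕ) (hkn : k + 1 ≤ n) :
    uWin n k (n - k) = winSet n (k + 1) := by
  ext A
  simp only [uWin, Set.mem_union, Set.mem_setOf_eq]
  constructor
  · rintro (h | ⟨a', ha', hA⟩)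
    · exact win_mono n k (k + 1) (by omega) h
    · intro x hx y hy
      have h1 := (hA hx).1
      have h2 := (hA hy).2
      omega
  · intro hA
    by_cases hw : A ∈ winSet n k
    · exact Or.inl hw
    · simp only [winSet, Set.mem_setOf_eq, not_forall] at hw
      obtain ⟨x0, hx0, y0, hy0, hxy0⟩ := hw
      obtain ⟨mn, hmn, hmin⟩ := Set.exists_min_image A (fun x => (x : ℕ)) A.toFinite ⟨x0, hx0⟩
      refine Or.inr ⟨(mn : ℕ), ?_, ?_⟩
      · have hy0n := y0.isLt
        have h1 := hmin x0 hx0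
        have h2 := hA mn hmn y0 hy0
        omega
      · intro x hx
        exact ⟨hmin x hx, hA mn hmn x hx⟩

/-- One step of the window filtration: `winSet n k → winSet n (k+1)` is in `M`. -/
lemma win_step (hsat : IsSaturated M) {n k : ℕ} (hk1 : 1 ≤ k) (hkn : k + 1 ≤ n)
    (Hgen : GenMStmt M (k + 1)) :
    M (subIncl (dcl_win k) (dcl_win (k + 1)) (win_mono n k (k + 1) (Nat.le_succ k))) := by
  have aux : ∀ a, a ≤ n - k → M (subIncl (dcl_win k) (dcl_uWin n k a)
      (Set.subset_union_left)) := by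
    intro a
    induction a with
    | zero =>
        intro _
        exact M_subIncl_congr rfl (uWin_zero n k).symm
          (M_subIncl_self hsat (dcl_win k) (dcl_win k) subset_rfl)
    | succ a ih =>
        intro ha
        have hae : a + (k + 1) ≤ n := by omega
        set e := intervalEmb a (k + 1) n hae with he
        -- the local generalized horn
        have hloc := Hgen (innSet (k + 1)) ⟨⟨1, by omega⟩, by simp [innSet]; omega⟩ subset_rfl
        have hloc' : M (subIncl (𝒮 := winSet (k + 1) k) (𝒯 := (Set.univ : SubSet (k + 1)))
            (dcl_win k) (dcl_univ) (Set.subset_univ _)) := by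
          refine M_subIncl_congr ?_ rfl hloc
          rw [inn_compl, ← win_eq_gh]
        have hpush := M_push hsat e _ _ _ hloc'
        have hf : M (subIncl (dcl_inter (dcl_face (iccSet n a (k + 1))) (dcl_uWin n k a))
            (dcl_face (iccSet n a (k + 1))) Set.inter_subset_left) := by
          refine M_subIncl_congr ?_ ?_ hpush
          · rw [push_win, uWin_inter]
          · rw [push_univ, intervalEmb_range]
        have hstep := M_pushout_step hsat (dcl_face (iccSet n a (k + 1))) (dcl_uWin n k a) hf
        have hstep' : M (subIncl (dcl_uWin n k a) (dcl_uWin n k (a + 1))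
            (by rw [uWin_succ]; exact Set.subset_union_right)) :=
          M_subIncl_congr rfl (uWin_succ n k a).symm hstep
        exact M_subIncl_trans hsat _ _ _ _ _ (ih (by omega)) hstep'
  have hfin := aux (n - k) le_rfl
  exact M_subIncl_congr rfl (uWin_final n k hkn) hfin

/-- The full window chain `winSet n 1 → winSet n (n-1)` is in `M`. -/
lemma win_chain (hsat : IsSaturated M) {n : ℕ} (hn : 2 ≤ n)
    (Hgen : ∀ m' ≤ n - 1, GenMStmt M m') :
    M (subIncl (dcl_win 1) (dcl_win (n - 1)) (win_mono n 1 (n - 1) (by omega))) := by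
  have aux : ∀ t, 1 + t ≤ n - 1 → M (subIncl (dcl_win 1) (dcl_win (1 + t))
      (win_mono n 1 (1 + t) (by omega))) := by
    intro t
    induction t with
    | zero =>
        intro _
        exact M_subIncl_self hsat _ _ _
    | succ t ih =>
        intro ht
        have h1 : 1 ≤ 1 + t := by omega
        have h2 : (1 + t) + 1 ≤ n := by omega
        have h3 : 1 + t + 1 ≤ n - 1 := by omega
        have hstep := win_step hsat (k := 1 + t) h1 h2 (Hgen (1 + t + 1) h3)
        have := M_subIncl_trans hsat _ _ _ _ _ (ih (by omega)) hstep
        exact M_subIncl_congr rfl (by rw [show 1 + (t + 1) = 1 + t + 1 by omega]) this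
  have := aux (n - 2) (by omega)
  exact M_subIncl_congr rfl (by rw [show n - 1 = 1 + (n - 2) by omega]) this

end Window
section Outer

variable {M : MorphismProperty SSet.{0}}

/-- `Δ[n]` is isomorphic to the trivial simplicial subset. -/
noncomputable def univIso (n : ℕ) : Δ[n] ≅ sub (Set.univ : SubSet n) dcl_univ :=
  NatIso.ofComponents
    (fun m => Equiv.toIso ⟨fun α => ⟨α, trivial⟩, fun α => α.1, fun _ => rfl, fun _ => rfl⟩)
    (by intros; rfl)

/-- The horn `Λ[n, i]` is the simplicial subset given by the generalized horn condition. -/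
noncomputable def hornIso (n : ℕ) (i : Fin (n + 1)) :
    (Λ[n, i] : SSet.{0}) ≅ sub (ghSet {i}ᶜ) (dcl_gh _) := by
  refine NatIso.ofComponents
    (fun m => Equiv.toIso (Equiv.subtypeEquivRight (fun α => ?_))) (by intros; rfl)
  constructor
  · intro h
    obtain ⟨x, hx⟩ := Set.ne_univ_iff_exists_notMem _ |>.mp h
    rw [Set.mem_union] at hx
    push_neg at hx
    exact ⟨x, hx.2, hx.1⟩
  · rintro ⟨x, hxc, hxr⟩ h
    have := h ▸ Set.mem_univ x
    rw [Set.mem_union] at this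
    rcases this with h1 | h1
    · exact hxr h1
    · exact hxc h1

/-- The spine is the simplicial subset given by the window-1 condition. -/
noncomputable def spineIso (n : ℕ) : spine n ≅ sub (winSet n 1) (dcl_win 1) := by
  refine NatIso.ofComponents
    (fun m => Equiv.toIso (Equiv.subtypeEquivRight (fun α => ?_))) (by intros; rfl)
  constructor
  · rintro ⟨i, hi⟩ x ⟨kx, rfl⟩ y ⟨ky, rfl⟩
    have h1 := hi kx
    have h2 := hi ky
    omega
  · intro h
    refine ⟨(SSet.stdSimplex.asOrderHom α) 0, fun k => ?_⟩
    have h1 := h ((SSet.stdSimplex.asOrderHom α) 0) ⟨0, rfl⟩ ((SSet.stdSimplex.asOrderHom α) k) ⟨k, rfl⟩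
    have h2 : (SSet.stdSimplex.asOrderHom α) 0 ≤ (SSet.stdSimplex.asOrderHom α) k :=
      (SSet.stdSimplex.asOrderHom α).monotone (Fin.zero_le k)
    rw [Fin.le_def] at h2
    omega

/-- Arrow iso between the spine inclusion and its `sub`-world incarnation. -/
noncomputable def spineArrowIso (n : ℕ) :
    Arrow.mk (spineInclusion n) ≅
      Arrow.mk (subIncl (dcl_win (n := n) 1) dcl_univ (Set.subset_univ _)) :=
  Arrow.isoMk (spineIso n) (univIso n) rfl

/-- Arrow iso between the horn inclusion and its `sub`-world incarnation. -/
noncomputable def hornArrowIso (n : ℕ) (i : Fin (n + 1)) :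
    Arrow.mk (Λ[n, i].ι) ≅
      Arrow.mk (subIncl (dcl_gh {i}ᶜ) dcl_univ (Set.subset_univ _)) :=
  Arrow.isoMk (hornIso n i) (univIso n) rfl

lemma hornM (hsat : IsSaturated M)
    (hcancel : ∀ {A B C : SSet} (i : A ⟶ B) (j : B ⟶ C), Mono i → Mono j →
      M i → M (i ≫ j) → M j)
    (hspine : ∀ n : ℕ, M (spineInclusion n)) :
    ∀ (n : ℕ) (i : Fin (n + 1)), 0 < (i : ℕ) → (i : ℕ) < n →
      M (Λ[n, i].ι) := by
  haveI : M.IsStableUnderCobaseChange := hsat.cobase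
  haveI : M.RespectsIso := inferInstance
  intro n
  induction n using Nat.strong_induction_on with
  | _ n IH =>
    intro i h0 hn
    obtain ⟨d, rfl⟩ : ∃ d, n = d + 2 := ⟨n - 2, by omega⟩
    have HH : ∀ m' ≤ d + 1, HornMStmt M m' := by
      intro m' hm' i' hi0 hi1
      have hhorn := IH m' (by omega) i' hi0 hi1
      exact (M.arrow_mk_iso_iff (hornArrowIso m' i')).mp hhorn
    have Hgen : ∀ m' ≤ (d + 2) - 1, GenMStmt M m' := fun m' h =>
      genM_all hsat m' (fun m'' h' => HH m'' (by omega))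
    have h1 := win_chain hsat (n := d + 2) (by omega) Hgen
    have hiInn : i ∈ innSet (d + 2) := ⟨h0, hn⟩
    have h2' := gen_chain hsat (m := d + 1) (Hgen (d + 1) (by omega))
      (innSet (d + 2)).ncard (innSet (d + 2)) le_rfl i hiInn subset_rfl
    have hWinGh : winSet (d + 2) (d + 1) = ghSet ((innSet (d + 2))ᶜ) := by
      rw [win_eq_gh, inn_compl]
    have h2 : M (subIncl (dcl_win (d + 1)) (dcl_gh {i}ᶜ)
        (hWinGh ▸ gh_mono (Set.compl_subset_compl.mpr
          (Set.singleton_subset_iff.mpr hiInn)))) :=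
      M_subIncl_congr hWinGh.symm rfl h2'
    have h3 := M_subIncl_trans hsat _ _ _ _ _ h1 h2
    have h4 : M (subIncl (dcl_win (n := d + 2) 1) dcl_univ (Set.subset_univ _)) :=
      (M.arrow_mk_iso_iff (spineArrowIso (d + 2))).mp (hspine (d + 2))
    have h5 := hcancel _ (subIncl (dcl_gh {i}ᶜ) dcl_univ (Set.subset_univ _))
      (mono_subIncl _ _ _) (mono_subIncl _ _ _) h3 h4
    exact (M.arrow_mk_iso_iff (hornArrowIso (d + 2) i)).mpr h5

end Outer
/-- a saturated class of monomorphisms with the right cancellation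
property within monomorphisms which contains all spine inclusions contains all
inner anodyne maps. -/
theorem innerAnodyne_le_of_spine (M : MorphismProperty SSet.{0})
    (hsat : IsSaturated M)
    (hmono : M ≤ MorphismProperty.monomorphisms SSet)
    (hcancel : ∀ {A B C : SSet} (i : A ⟶ B) (j : B ⟶ C), Mono i → Mono j →
      M i → M (i ≫ j) → M j)
    (hspine : ∀ n : ℕ, M (spineInclusion n)) :
    InnerAnodyne ≤ M := by
  intro X Y f hf
  refine hf M ?_ hsat
  rintro A B g ⟨n, i, h0, hn, rfl, rfl, rfl⟩
  have := hornM hsat hcancel hspine n i h0 hn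
  simpa using this

end Paper
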